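/- If the k-period of a string S (of length m) is strictly larger than d, then among any d consecutive positions of a text T, at most one position can be the ending position of a k-mismatch occurrence of S. -/

import Mathlib

/-- Hamming distance between the length-`n` strings `X[0..n-1]` and `Y[0..n-1]`
(strings are given as functions `ℕ → α`). -/
def HDn {α : Type*} [DecidableEq α] (n : ℕ) (X Y : ℕ → α) : ℕ :=
  hammingDist (fun i : Fin n => X i.val) (fun i : Fin n => Y i.val)

/-- `HD(S[ρ+1..n], S[1..n-ρ])`: Hamming distance between the length-`n` string
`S` shifted by `ρ` and itself. -/
def shiftHD {α : Type*} [DecidableEq α] (n : ℕ) (S : ℕ → α) (ρ : ℕ) : ℕ :=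
  HDn (n - ρ) (fun i => S (ρ + i)) S

/-- The `k`-period of a length-`n` string `S`: the minimal `π > 0` with
`HD(S[π+1..n], S[1..n-π]) ≤ 2k`. -/
noncomputable def kPeriod {α : Type*} [DecidableEq α] (k n : ℕ) (S : ℕ → α) : ℕ :=
  sInf {π | 0 < π ∧ shiftHD n S π ≤ 2 * k}

lemma HDn_comm {α : Type*} [DecidableEq α] (n : ℕ) (X Y : ℕ → α) :
    HDn n X Y = HDn n Y X := hammingDist_comm _ _

lemma HDn_triangle {α : Type*} [DecidableEq α] (n : ℕ) (X Y Z : ℕ → α) :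
    HDn n X Z ≤ HDn n X Y + HDn n Y Z := hammingDist_triangle _ _ _

lemma HDn_mono {α : Type*} [DecidableEq α] {n n' : ℕ} (h : n' ≤ n) (X Y : ℕ → α) :
    HDn n' X Y ≤ HDn n X Y := by
  unfold HDn hammingDist
  apply Finset.card_le_card_of_injOn (fun i => Fin.castLE h i)
  · intro i hi
    simp only [Finset.mem_coe, Finset.mem_filter, Finset.mem_univ, true_and] at hi ⊢
    exact hi
  · intro a _ b _ hab
    exact Fin.castLE_injective h hab

lemma HDn_shift {α : Type*} [DecidableEq α] (n ρ : ℕ) (X Y : ℕ → α) :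
    HDn n (fun i => X (ρ + i)) (fun i => Y (ρ + i)) ≤ HDn (ρ + n) X Y := by
  unfold HDn hammingDist
  apply Finset.card_le_card_of_injOn
    (fun i => (⟨ρ + i.val, by have := i.isLt; omega⟩ : Fin (ρ + n)))
  · intro i hi
    simp only [Finset.mem_coe, Finset.mem_filter, Finset.mem_univ, true_and] at hi ⊢
    exact hi
  · intro a _ b _ hab
    have : ρ + a.val = ρ + b.val := congrArg Fin.val hab
    exact Fin.ext (by omega)

/-- If the `k`-period of a pattern `P` of length `m` is larger than `d`, then among
any `d` consecutive positions of a text `T`, at most one can be the ending position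
of a `k`-mismatch occurrence of `P`: two occurrences (starting at `t₁ ≤ t₂`, hence
ending within a window of `d` consecutive positions when `t₂ - t₁ < d`) coincide. -/
theorem stmt3 {α : Type*} [DecidableEq α] (k d m : ℕ) (P T : ℕ → α)
    (hper : d < kPeriod k m P) (t₁ t₂ : ℕ)
    (h1 : HDn m P (fun i => T (t₁ + i)) ≤ k)
    (h2 : HDn m P (fun i => T (t₂ + i)) ≤ k)
    (hle : t₁ ≤ t₂) (hwin : t₂ - t₁ < d) : t₁ = t₂ := by
  by_contra hne
  obtain ⟨ρ, rfl⟩ : ∃ ρ, t₂ = t₁ + ρ := ⟨t₂ - t₁, by omega⟩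
  have hρpos : 0 < ρ := by omega
  have hρd : ρ < d := by omega
  have hmem : ρ ∈ {π | 0 < π ∧ shiftHD m P π ≤ 2 * k} := by
    refine ⟨hρpos, ?_⟩
    rcases le_or_gt ρ m with hρm | hρm
    · have key : shiftHD m P ρ ≤
          HDn (m - ρ) (fun i => P (ρ + i)) (fun i => T (t₁ + ρ + i)) +
          HDn (m - ρ) (fun i => T (t₁ + ρ + i)) P := HDn_triangle _ _ _ _
      have e1 : HDn (m - ρ) (fun i => P (ρ + i)) (fun i => T (t₁ + ρ + i)) ≤ k := by
        have hfe : (fun i => T (t₁ + ρ + i)) = fun i => (fun j => T (t₁ + j)) (ρ + i) := by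
          funext i; rw [Nat.add_assoc]
        rw [hfe]
        refine le_trans (HDn_shift (m - ρ) ρ P (fun j => T (t₁ + j))) ?_
        rw [Nat.add_sub_cancel' hρm]
        exact h1
      have e2 : HDn (m - ρ) (fun i => T (t₁ + ρ + i)) P ≤ k := by
        rw [HDn_comm]
        exact le_trans (HDn_mono (Nat.sub_le m ρ) _ _) h2
      exact le_trans key (by omega)
    · have hz : m - ρ = 0 := by omega
      unfold shiftHD
      rw [hz]
      unfold HDn
      rw [hammingDist_eq_zero.mpr (funext fun i => i.elim0)]
      exact Nat.zero_le _
  have hinf := Nat.sInf_le hmem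
  unfold kPeriod at hper
  omega
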